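/- If G is a finitely generated nilpotent group whose center is finite, then G itself is finite. -/

import Mathlib

theorem finite_of_fg_nilpotent_finite_center {G : Type*} [Group G]
    [Group.IsNilpotent G] [Group.FG G] (h : Finite (Subgroup.center G)) :
    Finite G := by
  obtain ⟨S, hS, hSfin⟩ := Group.fg_iff.mp ‹Group.FG G›
  haveI := hSfin.to_subtype
  have key : ∀ n : ℕ, Finite (upperCentralSeries G n) := by
    intro n
    induction n with
    | zero =>
      rw [upperCentralSeries, upperCentralSeries_zero]
      infer_instance
    | succ n ih =>
      set Z := upperCentralSeries G n with hZ
      -- the commutator-with-generators map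
      let ψ : upperCentralSeries G (n + 1) → (S → Z) := fun g s =>
        ⟨(g : G) * s * (g : G)⁻¹ * (s : G)⁻¹,
          (mem_upperCentralSeries_succ_iff).mp g.2 s⟩
      -- elements with equal ψ differ by a central element
      have hcent : ∀ g g' : upperCentralSeries G (n + 1), ψ g = ψ g' →
          (g' : G)⁻¹ * g ∈ Subgroup.center G := by
        intro g g' hgg'
        have hsc : ∀ s : G, s ∈ S → s * ((g' : G)⁻¹ * g) = ((g' : G)⁻¹ * g) * s := by
          intro s hs
          have := congrArg (fun f => ((f ⟨s, hs⟩ : Z) : G)) hgg'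
          simp only [ψ] at this
          have h1 : (g : G) * s * (g : G)⁻¹ = (g' : G) * s * (g' : G)⁻¹ := by
            have := mul_right_cancel (b := (s : G)⁻¹) this
            exact this
          calc s * ((g' : G)⁻¹ * g)
              = (g' : G)⁻¹ * ((g' : G) * s * (g' : G)⁻¹) * g := by group
            _ = (g' : G)⁻¹ * ((g : G) * s * (g : G)⁻¹) * g := by rw [h1]
            _ = (g' : G)⁻¹ * g * s := by group
            _ = ((g' : G)⁻¹ * g) * s := by group
        have htop : Subgroup.closure S ≤
            Subgroup.centralizer {(g' : G)⁻¹ * g} := by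
          rw [Subgroup.closure_le]
          intro s hs
          rw [SetLike.mem_coe, Subgroup.mem_centralizer_iff]
          intro a ha
          rw [Set.mem_singleton_iff] at ha
          subst ha
          exact (hsc s hs).symm
        rw [hS] at htop
        rw [Subgroup.mem_center_iff]
        intro y
        have hy : y ∈ Subgroup.centralizer {(g' : G)⁻¹ * g} := htop (Subgroup.mem_top y)
        rw [Subgroup.mem_centralizer_iff] at hy
        exact (hy _ (Set.mem_singleton _)).symm
      -- fibers of ψ are finite
      have hfib : ∀ b : S → Z, (ψ ⁻¹' {b}).Finite := by
        intro b
        rcases Set.eq_empty_or_nonempty (ψ ⁻¹' {b}) with he | ⟨g₀, hg₀⟩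
        · rw [he]; exact Set.finite_empty
        · rw [Set.finite_coe_iff.symm]
          have : ∀ g : ψ ⁻¹' {b}, ((g₀ : G)⁻¹ * (g : upperCentralSeries G (n+1)) :
              G) ∈ Subgroup.center G := by
            rintro ⟨g, hg⟩
            rw [Set.mem_preimage, Set.mem_singleton_iff] at hg hg₀
            exact hcent g g₀ (hg.trans hg₀.symm)
          refine Finite.of_injective
            (fun g : ψ ⁻¹' {b} => (⟨_, this g⟩ : Subgroup.center G)) ?_
          intro x y hxy
          simp only [Subtype.mk.injEq] at hxy
          have : ((x : upperCentralSeries G (n+1)) : G) =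
              ((y : upperCentralSeries G (n+1)) : G) := mul_left_cancel hxy
          exact Subtype.ext (Subtype.ext this)
      haveI : Finite (S → Z) := by
        haveI := ih
        infer_instance
      have huniv : (Set.univ : Set (upperCentralSeries G (n + 1))).Finite := by
        have : (Set.univ : Set (upperCentralSeries G (n + 1))) =
            ⋃ b : S → Z, ψ ⁻¹' {b} := by
          ext g; simp
        rw [this]
        exact Set.finite_iUnion hfib
      exact Set.finite_univ_iff.mp huniv
  obtain ⟨n, hn⟩ := Group.IsNilpotent.nilpotent' (G := G)
  haveI := key n
  rw [upperCentralSeries, hn] at this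
  exact Finite.of_surjective (fun g : (⊤ : Subgroup G) => (g : G))
    (fun g => ⟨⟨g, trivial⟩, rfl⟩)
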